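/- Let d = 1 and let f(η) = ξ·1_{ξ<ℓ} + (2ℓ−ξ)·1_{ℓ≤ξ<2ℓ} with ξ(η) = inf{|x| : η(x) = 0} and ℓ = ⌈1/q⌉. Then the FA1f Dirichlet form satisfies D(f) = q(1−q)·Σ_{x∈ℤ} μ(c_x·(f(η^x)−f(η))²) ≤ 4q(1−q). -/
import Mathlib


open Finset

noncomputable section

/-- The configuration `η` flipped at site `x ∈ ℤ`. -/
def flipZ (η : ℤ → Bool) (x : ℤ) : ℤ → Bool :=
  fun y => if y = x then !(η y) else η y

/-- Extension of a configuration on a finite set of sites by fully occupied outside. -/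
def extendZ (s : Finset ℤ) (η : ↥s → Bool) : ℤ → Bool :=
  fun x => if h : x ∈ s then η ⟨x, h⟩ else true

/-- Expectation, under the product Bernoulli(1−q) measure (`true` = occupied, probability
`1−q`; `false` = empty, probability `q`), of a function depending only on sites in `s`. -/
def ElocZ (q : ℝ) (s : Finset ℤ) (g : (ℤ → Bool) → ℝ) : ℝ :=
  ∑ η : ↥s → Bool, (∏ v : ↥s, if η v then (1 - q) else q) * g (extendZ s η)

/-- The FA1f constraint on `ℤ` (as a real indicator): a neighbour of `x` is empty. -/
def cIndZ (η : ℤ → Bool) (x : ℤ) : ℝ :=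
  if η (x - 1) = false ∨ η (x + 1) = false then 1 else 0

/-- The FA1f Dirichlet form on `ℤ` of a function depending only on sites in `s`. -/
def DformZ (q : ℝ) (s : Finset ℤ) (f : (ℤ → Bool) → ℝ) : ℝ :=
  q * (1 - q) * ∑' x : ℤ,
    ElocZ q (s ∪ {x - 1, x, x + 1}) (fun η => cIndZ η x * (f (flipZ η x) - f η) ^ 2)

/-- `ξ(η) = inf{|x| : η(x) = 0}`, the distance from the origin to the nearest empty site. -/
def xiZ (η : ℤ → Bool) : ℕ :=
  sInf {k : ℕ | ∃ x : ℤ, x.natAbs = k ∧ η x = false}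

/-- The test function `f(η) = ξ·1_{ξ<ℓ} + (2ℓ−ξ)·1_{ℓ≤ξ<2ℓ}`. -/
def fPers (ℓ : ℕ) (η : ℤ → Bool) : ℝ :=
  if xiZ η < ℓ then (xiZ η : ℝ)
  else if xiZ η < 2 * ℓ then (2 * ℓ : ℝ) - (xiZ η : ℝ) else 0

/-- The window `{x : |x| ≤ 2ℓ}` on which `fPers ℓ` depends. -/
def windowZ (ℓ : ℕ) : Finset ℤ := Finset.Icc (-(2 * ℓ : ℤ)) (2 * ℓ : ℤ)

/-! ### Auxiliary machinery -/

/-- `g` depends only on sites in `s`. -/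
def LocZ (s : Finset ℤ) (g : (ℤ → Bool) → ℝ) : Prop :=
  ∀ η η' : ℤ → Bool, (∀ y ∈ s, η y = η' y) → g η = g η'

lemma locZ_mono {s t : Finset ℤ} (hst : s ⊆ t) {g : (ℤ → Bool) → ℝ} (h : LocZ s g) :
    LocZ t g :=
  fun η η' hagree => h η η' fun y hy => hagree y (hst hy)

lemma extendZ_apply_mem {s : Finset ℤ} (η : ↥s → Bool) {x : ℤ} (h : x ∈ s) :
    extendZ s η x = η ⟨x, h⟩ := dif_pos h

lemma ElocZ_eq_sum (q : ℝ) (s : Finset ℤ) (g : (ℤ → Bool) → ℝ) :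
    ElocZ q s g = ∑ η : ↥s → Bool,
      (∏ x ∈ s, if extendZ s η x then (1 - q) else q) * g (extendZ s η) := by
  unfold ElocZ
  refine Finset.sum_congr rfl fun η _ => ?_
  congr 1
  rw [← Finset.prod_coe_sort s (fun x => if extendZ s η x then (1 - q) else q)]
  refine Finset.prod_congr rfl fun v _ => ?_
  rw [extendZ_apply_mem η v.2]

/-- Splitting off one site. -/
def insEquiv (a : ℤ) (u : Finset ℤ) (ha : a ∉ u) :
    Bool × (↥u → Bool) ≃ (↥(insert a u) → Bool) where
  toFun p := fun v => if h : (v : ℤ) ∈ u then p.2 ⟨v, h⟩ else p.1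
  invFun η := (η ⟨a, Finset.mem_insert_self a u⟩,
    fun v => η ⟨v, Finset.mem_insert_of_mem v.2⟩)
  left_inv := fun ⟨b, σ⟩ => by
    dsimp only
    congr 1
    · exact dif_neg ha
    · funext v; exact dif_pos v.2
  right_inv := fun η => by
    funext v
    dsimp only
    by_cases h : (v : ℤ) ∈ u
    · rw [dif_pos h]
    · rw [dif_neg h]
      have hva : (v : ℤ) = a := by
        have := v.2; rw [Finset.mem_insert] at this; tauto
      exact congrArg η (Subtype.ext hva.symm)

lemma extendZ_insert (a : ℤ) (u : Finset ℤ) (ha : a ∉ u) (b : Bool) (σ : ↥u → Bool) :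
    extendZ (insert a u) ((insEquiv a u ha) (b, σ)) =
      fun x => if x = a then b else extendZ u σ x := by
  funext x
  by_cases hx : x = a
  · subst hx
    rw [if_pos rfl, extendZ_apply_mem _ (Finset.mem_insert_self x u)]
    exact dif_neg ha
  · rw [if_neg hx]
    by_cases hu : x ∈ u
    · rw [extendZ_apply_mem _ (Finset.mem_insert_of_mem hu), extendZ_apply_mem _ hu]
      exact dif_pos hu
    · have hx' : x ∉ insert a u := by simp [hx, hu]
      unfold extendZ
      rw [dif_neg hx', dif_neg hu]

lemma ElocZ_insert (q : ℝ) (a : ℤ) (u : Finset ℤ) (ha : a ∉ u) (g : (ℤ → Bool) → ℝ)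
    (hg : LocZ u g) : ElocZ q (insert a u) g = ElocZ q u g := by
  rw [ElocZ_eq_sum, ElocZ_eq_sum]
  rw [← Equiv.sum_comp (insEquiv a u ha) (fun η =>
    (∏ x ∈ insert a u, if extendZ (insert a u) η x then (1 - q) else q) *
      g (extendZ (insert a u) η))]
  rw [Fintype.sum_prod_type]
  have key : ∀ (b : Bool) (σ : ↥u → Bool),
      (∏ x ∈ insert a u,
          if extendZ (insert a u) ((insEquiv a u ha) (b, σ)) x then (1 - q) else q) *
        g (extendZ (insert a u) ((insEquiv a u ha) (b, σ)))
      = (if b then (1 - q) else q) *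
        ((∏ x ∈ u, if extendZ u σ x then (1 - q) else q) * g (extendZ u σ)) := by
    intro b σ
    have hE := extendZ_insert a u ha b σ
    have hEa : extendZ (insert a u) ((insEquiv a u ha) (b, σ)) a = b := by
      rw [hE]; exact if_pos rfl
    have hEx : ∀ x ∈ u, extendZ (insert a u) ((insEquiv a u ha) (b, σ)) x
        = extendZ u σ x := fun x hx => by
      rw [hE]; exact if_neg (by rintro rfl; exact ha hx)
    have h1 : (∏ x ∈ u,
          if extendZ (insert a u) ((insEquiv a u ha) (b, σ)) x then (1 - q) else q)
        = ∏ x ∈ u, if extendZ u σ x then (1 - q) else q :=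
      Finset.prod_congr rfl fun x hx => by rw [hEx x hx]
    have h2 : g (extendZ (insert a u) ((insEquiv a u ha) (b, σ))) = g (extendZ u σ) :=
      hg _ _ fun y hy => hEx y hy
    rw [Finset.prod_insert ha, hEa, h1, h2]
    ring
  simp_rw [key]
  rw [Fintype.sum_bool, ← Finset.sum_add_distrib]
  refine Finset.sum_congr rfl fun σ _ => ?_
  simp only [if_pos, if_neg, Bool.false_eq_true, if_false, if_true]
  ring

lemma ElocZ_union (q : ℝ) (s : Finset ℤ) (g : (ℤ → Bool) → ℝ) (hg : LocZ s g) :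
    ∀ t : Finset ℤ, Disjoint t s → ElocZ q (t ∪ s) g = ElocZ q s g := by
  intro t
  induction t using Finset.induction_on with
  | empty => intro _; rw [Finset.empty_union]
  | @insert a t ha ih =>
    intro hd
    rw [Finset.disjoint_insert_left] at hd
    have ha' : a ∉ t ∪ s := by
      rw [Finset.mem_union]; push_neg; exact ⟨ha, hd.1⟩
    rw [Finset.insert_union,
      ElocZ_insert q a (t ∪ s) ha' g (locZ_mono Finset.subset_union_right hg),
      ih hd.2]

lemma ElocZ_of_subset (q : ℝ) {s S : Finset ℤ} (hsS : s ⊆ S) (g : (ℤ → Bool) → ℝ)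
    (hg : LocZ s g) : ElocZ q S g = ElocZ q s g := by
  have := ElocZ_union q s g hg (S \ s) Finset.sdiff_disjoint
  rwa [Finset.sdiff_union_of_subset hsS] at this

lemma ElocZ_const (q c : ℝ) (s : Finset ℤ) : ElocZ q s (fun _ => c) = c := by
  rw [ElocZ_of_subset q (Finset.empty_subset s) (fun _ => c) (fun _ _ _ => rfl)]
  unfold ElocZ
  haveI : IsEmpty (↥(∅ : Finset ℤ)) := by
    constructor; rintro ⟨x, hx⟩; simp at hx
  haveI : Unique ((↥(∅ : Finset ℤ)) → Bool) := Pi.uniqueOfIsEmpty _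
  rw [Fintype.sum_unique]
  rw [Finset.prod_of_isEmpty, one_mul]

lemma ElocZ_finsetSum (q : ℝ) (s : Finset ℤ) (X : Finset ℤ) (G : ℤ → (ℤ → Bool) → ℝ) :
    ∑ x ∈ X, ElocZ q s (G x) = ElocZ q s (fun η => ∑ x ∈ X, G x η) := by
  unfold ElocZ
  rw [Finset.sum_comm]
  exact Finset.sum_congr rfl fun η _ => by rw [Finset.mul_sum]

lemma ElocZ_mono {q : ℝ} (hq0 : 0 ≤ q) (hq1 : q ≤ 1) (s : Finset ℤ)
    {g h : (ℤ → Bool) → ℝ} (hgh : ∀ η, g η ≤ h η) : ElocZ q s g ≤ ElocZ q s h := by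
  unfold ElocZ
  refine Finset.sum_le_sum fun η _ => ?_
  exact mul_le_mul_of_nonneg_left (hgh _)
    (Finset.prod_nonneg fun v _ => by split <;> linarith)

/-! ### Properties of `xiZ` and `fPers` -/

lemma xiZ_le {η : ℤ → Bool} {y : ℤ} (h : η y = false) : xiZ η ≤ y.natAbs :=
  Nat.sInf_le ⟨y, rfl, h⟩

lemma xiZ_witness {η : ℤ → Bool} {y : ℤ} (h : η y = false) :
    ∃ z : ℤ, z.natAbs = xiZ η ∧ η z = false := by
  have h' : {k : ℕ | ∃ x : ℤ, x.natAbs = k ∧ η x = false}.Nonempty := ⟨y.natAbs, y, rfl, h⟩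
  exact Nat.sInf_mem h'

lemma fPers_eq_min (ℓ : ℕ) (η : ℤ → Bool) :
    fPers ℓ η = ((min (xiZ η) (2 * ℓ - xiZ η) : ℕ) : ℝ) := by
  unfold fPers
  split_ifs with h1 h2
  · have : min (xiZ η) (2 * ℓ - xiZ η) = xiZ η := by omega
    rw [this]
  · have h3 : min (xiZ η) (2 * ℓ - xiZ η) = 2 * ℓ - xiZ η := by omega
    rw [h3, Nat.cast_sub (by omega)]
    push_cast; ring
  · have h3 : min (xiZ η) (2 * ℓ - xiZ η) = 0 := by omega
    rw [h3]; norm_num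

lemma sq_diff_le (a b : ℕ) (h1 : a ≤ b + 1) (h2 : b ≤ a + 1) :
    ((a : ℝ) - (b : ℝ)) ^ 2 ≤ 1 := by
  have e1 : (a : ℝ) ≤ (b : ℝ) + 1 := by exact_mod_cast h1
  have e2 : (b : ℝ) ≤ (a : ℝ) + 1 := by exact_mod_cast h2
  nlinarith

lemma mem_windowZ {ℓ : ℕ} {x : ℤ} : x ∈ windowZ ℓ ↔ x.natAbs ≤ 2 * ℓ := by
  simp only [windowZ, Finset.mem_Icc]
  omega

lemma fPers_local (ℓ : ℕ) : LocZ (windowZ ℓ) (fPers ℓ) := by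
  intro η η' hag
  have hag' : ∀ y : ℤ, y.natAbs ≤ 2 * ℓ → η y = η' y := fun y hy =>
    hag y (mem_windowZ.mpr hy)
  by_cases hex : ∃ y : ℤ, y.natAbs ≤ 2 * ℓ ∧ η y = false
  · obtain ⟨y, hy, hf⟩ := hex
    have hf' : η' y = false := by rw [← hag' y hy]; exact hf
    have hxi : xiZ η = xiZ η' := by
      apply le_antisymm
      · obtain ⟨z, hz, hzf⟩ := xiZ_witness hf'
        have hzb : z.natAbs ≤ 2 * ℓ := by
          have := xiZ_le hf'
          omega
        have hηz : η z = false := by rw [hag' z hzb]; exact hzf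
        exact hz ▸ xiZ_le hηz
      · obtain ⟨z, hz, hzf⟩ := xiZ_witness hf
        have hzb : z.natAbs ≤ 2 * ℓ := by
          have := xiZ_le hf
          omega
        have hηz : η' z = false := by rw [← hag' z hzb]; exact hzf
        exact hz ▸ xiZ_le hηz
    unfold fPers; rw [hxi]
  · push_neg at hex
    have hex' : ∀ y : ℤ, y.natAbs ≤ 2 * ℓ → η' y ≠ false := fun y hy => by
      rw [← hag' y hy]; exact hex y hy
    have key : ∀ ζ : ℤ → Bool, (∀ y : ℤ, y.natAbs ≤ 2 * ℓ → ζ y ≠ false) →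
        fPers ℓ ζ = 0 := by
      intro ζ hζ
      by_cases h0 : ∃ y, ζ y = false
      · obtain ⟨y, hy⟩ := h0
        obtain ⟨z, hz, hzf⟩ := xiZ_witness hy
        have hgt : 2 * ℓ < xiZ ζ := by
          by_contra hle
          push_neg at hle
          exact hζ z (by omega) hzf
        unfold fPers
        rw [if_neg (by omega), if_neg (by omega)]
      · push_neg at h0
        have hz : xiZ ζ = 0 := by
          unfold xiZ
          have : {k : ℕ | ∃ x : ℤ, x.natAbs = k ∧ ζ x = false} = ∅ := by
            ext k
            simp only [Set.mem_setOf_eq, Set.mem_empty_iff_false, iff_false]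
            rintro ⟨x, -, hx⟩
            exact absurd hx (by simp [h0 x])
          rw [this, Nat.sInf_empty]
        unfold fPers
        rw [hz]
        by_cases hℓ : 0 < ℓ
        · rw [if_pos hℓ]; norm_num
        · rw [if_neg hℓ, if_neg (by omega)]
    rw [key η hex, key η' hex']

lemma fPers_flip_eq (ℓ : ℕ) {x : ℤ} (hx : x ∉ windowZ ℓ) (η : ℤ → Bool) :
    fPers ℓ (flipZ η x) = fPers ℓ η := by
  refine fPers_local ℓ _ _ fun y hy => ?_
  have hyx : y ≠ x := fun h => hx (h ▸ hy)
  simp [flipZ, hyx]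

/-! ### The core pointwise bound -/

lemma core (ℓ : ℕ) (x : ℤ) (η : ℤ → Bool) :
    cIndZ η x * (fPers ℓ (flipZ η x) - fPers ℓ η) ^ 2 ≤
      if xiZ η = x.natAbs ∨ xiZ η = x.natAbs + 1 then (1 : ℝ) else 0 := by
  by_cases hc : η (x - 1) = false ∨ η (x + 1) = false
  case neg =>
    unfold cIndZ
    rw [if_neg hc, zero_mul]
    split_ifs <;> norm_num
  case pos =>
    unfold cIndZ
    rw [if_pos hc, one_mul]
    obtain ⟨n, hnx, hnabs, hn⟩ : ∃ n : ℤ, n ≠ x ∧ n.natAbs ≤ x.natAbs + 1 ∧ η n = false := by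
      rcases hc with h | h
      · exact ⟨x - 1, by omega, by omega, h⟩
      · exact ⟨x + 1, by omega, by omega, h⟩
    have hflipn : flipZ η x n = false := by
      simp only [flipZ, if_neg hnx]; exact hn
    have hη_le : xiZ η ≤ x.natAbs + 1 := le_trans (xiZ_le hn) hnabs
    have hf_le : xiZ (flipZ η x) ≤ x.natAbs + 1 := le_trans (xiZ_le hflipn) hnabs
    by_cases heq : xiZ (flipZ η x) = xiZ η
    · have hff : fPers ℓ (flipZ η x) = fPers ℓ η := by
        rw [fPers_eq_min, fPers_eq_min, heq]
      rw [hff, sub_self]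
      split_ifs <;> norm_num
    · have main : (xiZ η = x.natAbs ∨ xiZ η = x.natAbs + 1) ∧
          xiZ (flipZ η x) ≤ xiZ η + 1 ∧ xiZ η ≤ xiZ (flipZ η x) + 1 := by
        cases hx : η x with
        | false =>
          have h1 : xiZ η ≤ xiZ (flipZ η x) := by
            obtain ⟨z, hz, hzf⟩ := xiZ_witness hflipn
            have hzx : z ≠ x := by
              intro h
              rw [h] at hzf
              simp [flipZ, hx] at hzf
            have hηz : η z = false := by
              rw [← hzf]; simp [flipZ, hzx]
            exact hz ▸ xiZ_le hηz
          have h2 : xiZ η = x.natAbs := by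
            obtain ⟨z, hz, hzf⟩ := xiZ_witness hx
            by_cases hzx : z = x
            · rw [← hz, hzx]
            · have hfz : flipZ η x z = false := by
                simp only [flipZ, if_neg hzx]; exact hzf
              exact absurd (le_antisymm (hz ▸ xiZ_le hfz) h1) heq
          exact ⟨Or.inl h2, by omega, by omega⟩
        | true =>
          have hfx : flipZ η x x = false := by simp [flipZ, hx]
          have h1 : xiZ (flipZ η x) ≤ xiZ η := by
            obtain ⟨z, hz, hzf⟩ := xiZ_witness hn
            have hzx : z ≠ x := by
              intro h; rw [h, hx] at hzf; exact Bool.noConfusion hzf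
            have hfz : flipZ η x z = false := by
              simp only [flipZ, if_neg hzx]; exact hzf
            exact hz ▸ xiZ_le hfz
          have h3 : xiZ (flipZ η x) = x.natAbs := by
            obtain ⟨z, hz, hzf⟩ := xiZ_witness hfx
            by_cases hzx : z = x
            · rw [← hz, hzx]
            · have hηz : η z = false := by
                rw [← hzf]; simp [flipZ, hzx]
              exact absurd (le_antisymm h1 (hz ▸ xiZ_le hηz)) heq
          have h4 : xiZ η = x.natAbs + 1 := by omega
          exact ⟨Or.inr h4, by omega, by omega⟩
      obtain ⟨hcase, h12, h21⟩ := main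
      rw [if_pos hcase, fPers_eq_min, fPers_eq_min]
      exact sq_diff_le _ _ (by omega) (by omega)

/-! ### Counting -/

lemma count (ℓ k : ℕ) :
    (∑ x ∈ windowZ ℓ, if k = x.natAbs ∨ k = x.natAbs + 1 then (1 : ℝ) else 0) ≤ 4 := by
  rw [Finset.sum_boole]
  have hsub : (windowZ ℓ).filter (fun x => k = x.natAbs ∨ k = x.natAbs + 1) ⊆
      ({(k : ℤ), -(k : ℤ), (k : ℤ) - 1, 1 - (k : ℤ)} : Finset ℤ) := by
    intro x hx
    rw [Finset.mem_filter] at hx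
    have := hx.2
    simp only [Finset.mem_insert, Finset.mem_singleton]
    omega
  have hcard : ((windowZ ℓ).filter (fun x => k = x.natAbs ∨ k = x.natAbs + 1)).card ≤ 4 := by
    refine le_trans (Finset.card_le_card hsub) ?_
    refine le_trans (Finset.card_insert_le _ _) ?_
    refine Nat.succ_le_succ ?_
    refine le_trans (Finset.card_insert_le _ _) ?_
    refine Nat.succ_le_succ ?_
    refine le_trans (Finset.card_insert_le _ _) ?_
    simp
  exact_mod_cast hcard

/-! ### Main bound -/

lemma dirichlet_aux (q : ℝ) (hq0 : 0 ≤ q) (hq1 : q ≤ 1) (ℓ : ℕ) :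
    DformZ q (windowZ ℓ) (fPers ℓ) ≤ 4 * q * (1 - q) := by
  unfold DformZ
  set S : Finset ℤ := Finset.Icc (-(2 * (ℓ : ℤ) + 1)) (2 * (ℓ : ℤ) + 1) with hS
  have hT0 : ∀ x : ℤ, x ∉ windowZ ℓ →
      ElocZ q (windowZ ℓ ∪ {x - 1, x, x + 1})
        (fun η => cIndZ η x * (fPers ℓ (flipZ η x) - fPers ℓ η) ^ 2) = 0 := by
    intro x hx
    have hfun : (fun η => cIndZ η x * (fPers ℓ (flipZ η x) - fPers ℓ η) ^ 2)
        = fun _ : ℤ → Bool => (0 : ℝ) := by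
      funext η
      rw [fPers_flip_eq ℓ hx η]
      ring
    rw [hfun, ElocZ_const]
  rw [tsum_eq_sum hT0]
  have hloc : ∀ x : ℤ, LocZ (windowZ ℓ ∪ {x - 1, x, x + 1})
      (fun η => cIndZ η x * (fPers ℓ (flipZ η x) - fPers ℓ η) ^ 2) := by
    intro x η η' h
    have hx1 : η (x - 1) = η' (x - 1) := h _ (by simp)
    have hx2 : η (x + 1) = η' (x + 1) := h _ (by simp)
    have hxx : η x = η' x := h _ (by simp)
    have hC : cIndZ η x = cIndZ η' x := by unfold cIndZ; rw [hx1, hx2]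
    have hF : fPers ℓ η = fPers ℓ η' :=
      fPers_local ℓ η η' fun y hy => h y (Finset.mem_union_left _ hy)
    have hFf : fPers ℓ (flipZ η x) = fPers ℓ (flipZ η' x) := by
      refine fPers_local ℓ _ _ fun y hy => ?_
      unfold flipZ
      by_cases hyx : y = x
      · rw [if_pos hyx, if_pos hyx, hyx, hxx]
      · rw [if_neg hyx, if_neg hyx]
        exact h y (Finset.mem_union_left _ hy)
    dsimp only
    rw [hC, hF, hFf]
  have hstep : ∀ x ∈ windowZ ℓ,
      ElocZ q (windowZ ℓ ∪ {x - 1, x, x + 1})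
        (fun η => cIndZ η x * (fPers ℓ (flipZ η x) - fPers ℓ η) ^ 2)
      = ElocZ q S (fun η => cIndZ η x * (fPers ℓ (flipZ η x) - fPers ℓ η) ^ 2) := by
    intro x hx
    have hxw : x.natAbs ≤ 2 * ℓ := mem_windowZ.mp hx
    have hsub : windowZ ℓ ∪ {x - 1, x, x + 1} ⊆ S := by
      intro y hy
      simp only [windowZ, hS, Finset.mem_union, Finset.mem_Icc, Finset.mem_insert,
        Finset.mem_singleton] at hy ⊢
      omega
    exact (ElocZ_of_subset q hsub _ (hloc x)).symm
  rw [Finset.sum_congr rfl hstep, ElocZ_finsetSum]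
  have hpt : ∀ η : ℤ → Bool,
      (∑ x ∈ windowZ ℓ, cIndZ η x * (fPers ℓ (flipZ η x) - fPers ℓ η) ^ 2)
        ≤ (4 : ℝ) := by
    intro η
    calc (∑ x ∈ windowZ ℓ, cIndZ η x * (fPers ℓ (flipZ η x) - fPers ℓ η) ^ 2)
        ≤ ∑ x ∈ windowZ ℓ,
            (if xiZ η = x.natAbs ∨ xiZ η = x.natAbs + 1 then (1 : ℝ) else 0) :=
          Finset.sum_le_sum fun x _ => core ℓ x η
      _ ≤ 4 := count ℓ (xiZ η)
  have hE4 : ElocZ q S (fun η => ∑ x ∈ windowZ ℓ,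
      cIndZ η x * (fPers ℓ (flipZ η x) - fPers ℓ η) ^ 2) ≤ 4 := by
    calc ElocZ q S (fun η => ∑ x ∈ windowZ ℓ,
        cIndZ η x * (fPers ℓ (flipZ η x) - fPers ℓ η) ^ 2)
        ≤ ElocZ q S (fun _ => (4 : ℝ)) := ElocZ_mono hq0 hq1 S hpt
      _ = 4 := ElocZ_const q 4 S
  have hnn : 0 ≤ q * (1 - q) := mul_nonneg hq0 (by linarith)
  calc q * (1 - q) * ElocZ q S (fun η => ∑ x ∈ windowZ ℓ,
      cIndZ η x * (fPers ℓ (flipZ η x) - fPers ℓ η) ^ 2)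
      ≤ q * (1 - q) * 4 := mul_le_mul_of_nonneg_left hE4 hnn
    _ = 4 * q * (1 - q) := by ring

/-- for `d = 1`, `ℓ = ⌈1/q⌉`, the FA1f Dirichlet form of
`f(η) = ξ·1_{ξ<ℓ} + (2ℓ−ξ)·1_{ℓ≤ξ<2ℓ}` satisfies `D(f) ≤ 4q(1−q)`. -/
theorem dirichlet_fPers_le (q : ℝ) (hq0 : 0 < q) (hq1 : q < 1) :
    DformZ q (windowZ ⌈1 / q⌉₊) (fPers ⌈1 / q⌉₊) ≤ 4 * q * (1 - q) :=
  dirichlet_aux q hq0.le hq1.le ⌈1 / q⌉₊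

end
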